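/- For every positive integer n and every real α with 0 ≤ α ≤ 1, (√(2π) · e^{1/(12n+1) - 1/(16n) - α(1-α)/(4n)}) / √(n+α) < (n! / (n+α)^{n+1}) · e^{n+α} < (√(2π) · e^{1/(12n) - α(1-α)/(4n)}) / √(n+α). -/

import Mathlib

open Real Filter Nat


lemma log_le_pade {t : ℝ} (ht : 0 ≤ t) : Real.log (1 + t) ≤ t * (t + 6) / (4 * t + 6) := by
  have key : ∀ x ∈ Set.Ici (0:ℝ),
      HasDerivAt (fun y : ℝ => y * (y + 6) / (4 * y + 6) - Real.log (1 + y))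
        (((2*x+6) * (4*x+6) - (x*(x+6)) * 4) / (4*x+6)^2 - 1/(1+x)) x := by
    intro x hx
    have hx0 : (0:ℝ) ≤ x := hx
    have h1 : HasDerivAt (fun y : ℝ => y * (y + 6)) (2*x+6) x := by
      have := (hasDerivAt_id x).mul ((hasDerivAt_id x).add_const 6)
      exact this.congr_deriv (by simp only [id_eq]; ring)
    have h2 : HasDerivAt (fun y : ℝ => 4 * y + 6) 4 x := by
      simpa using ((hasDerivAt_id x).const_mul 4).add_const 6
    have h3 := h1.div h2 (by positivity)
    have h4 : HasDerivAt (fun y : ℝ => Real.log (1 + y)) (1/(1+x)) x := by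
      have := (Real.hasDerivAt_log (by positivity : (1:ℝ)+x ≠ 0)).comp x
        ((hasDerivAt_id x).const_add 1)
      simpa [one_div, Function.comp_def] using this
    exact h3.sub h4
  have hmono : MonotoneOn (fun y : ℝ => y * (y + 6) / (4 * y + 6) - Real.log (1 + y))
      (Set.Ici (0:ℝ)) := by
    apply monotoneOn_of_deriv_nonneg (convex_Ici 0)
    · exact ContinuousOn.sub
        (by fun_prop (disch := intro x hx; have : (0:ℝ) ≤ x := hx; positivity))
        (by
          apply ContinuousOn.log (by fun_prop)
          intro x hx; have : (0:ℝ) ≤ x := hx; positivity)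
    · intro x hx
      rw [interior_Ici] at hx
      exact ((key x (Set.mem_Ici.mpr (le_of_lt hx))).differentiableAt).differentiableWithinAt
    · intro x hx
      rw [interior_Ici] at hx
      have hx0 : (0:ℝ) < x := hx
      rw [(key x hx0.le).deriv]
      rw [sub_nonneg, div_le_div_iff₀ (by positivity) (by positivity)]
      nlinarith [pow_pos hx0 3]
  have h0 := hmono (Set.self_mem_Ici) (Set.mem_Ici.mpr ht) ht
  simp at h0
  linarith


lemma pade_le_log {t : ℝ} (ht : 0 ≤ t) : 2 * t / (t + 2) ≤ Real.log (1 + t) := by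
  have key : ∀ x ∈ Set.Ici (0:ℝ),
      HasDerivAt (fun y : ℝ => Real.log (1 + y) - 2 * y / (y + 2))
        (1/(1+x) - (2 * (x+2) - 2*x*1) / (x+2)^2) x := by
    intro x hx
    have hx0 : (0:ℝ) ≤ x := hx
    have h4 : HasDerivAt (fun y : ℝ => Real.log (1 + y)) (1/(1+x)) x := by
      have := (Real.hasDerivAt_log (by positivity : (1:ℝ)+x ≠ 0)).comp x
        ((hasDerivAt_id x).const_add 1)
      simpa [one_div, Function.comp_def] using this
    have h1 : HasDerivAt (fun y : ℝ => 2 * y) 2 x := by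
      simpa using (hasDerivAt_id x).const_mul 2
    have h2 : HasDerivAt (fun y : ℝ => y + 2) 1 x := (hasDerivAt_id x).add_const 2
    have h3 := h1.div h2 (by positivity)
    have h3' : HasDerivAt (fun y : ℝ => 2 * y / (y + 2)) ((2 * (x+2) - 2*x*1) / (x+2)^2) x := h3
    exact h4.sub h3'
  have hmono : MonotoneOn (fun y : ℝ => Real.log (1 + y) - 2 * y / (y + 2))
      (Set.Ici (0:ℝ)) := by
    apply monotoneOn_of_deriv_nonneg (convex_Ici 0)
    · exact ContinuousOn.sub
        (by
          apply ContinuousOn.log (by fun_prop)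
          intro x hx; have : (0:ℝ) ≤ x := hx; positivity)
        (by fun_prop (disch := intro x hx; have : (0:ℝ) ≤ x := hx; positivity))
    · intro x hx
      rw [interior_Ici] at hx
      exact ((key x (Set.mem_Ici.mpr (le_of_lt hx))).differentiableAt).differentiableWithinAt
    · intro x hx
      rw [interior_Ici] at hx
      have hx0 : (0:ℝ) < x := hx
      rw [(key x hx0.le).deriv]
      rw [sub_nonneg, div_le_div_iff₀ (by positivity) (by positivity)]
      nlinarith [sq_nonneg x]
  have h0 := hmono (Set.self_mem_Ici) (Set.mem_Ici.mpr ht) ht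
  simp at h0
  linarith

lemma key_lower {m α : ℝ} (hm : 1 ≤ m) (h0 : 0 ≤ α) (h1 : α ≤ 1) :
    (m + 1/2) * (Real.log (m + α) - Real.log m)
      ≤ α + α * (1 - α) / (4 * m) + 1 / (16 * m) := by
  have hm0 : (0:ℝ) < m := lt_of_lt_of_le one_pos hm
  set t := α / m with htdef
  have ht : 0 ≤ t := by positivity
  have hα : α = m * t := by rw [htdef]; field_simp
  have htm : m * t ≤ 1 := by rw [← hα]; exact h1
  have he : (1 : ℝ) + t = (m + α) / m := by field_simp [htdef]; linarith
  have hp := log_le_pade ht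
  rw [he, Real.log_div (by positivity) (by positivity)] at hp
  have step1 : (m + 1/2) * (Real.log (m + α) - Real.log m)
      ≤ (m + 1/2) * (t * (t + 6) / (4 * t + 6)) := by
    apply mul_le_mul_of_nonneg_left hp (by linarith)
  refine step1.trans ?_
  rw [hα, ← sub_nonneg]
  have hexp : m * t + m * t * (1 - m * t) / (4 * m) + 1 / (16 * m)
      - (m + 1/2) * (t * (t + 6) / (4 * t + 6))
      = (24*m^2*t^2 + 8*m*t^2 - 16*m^2*t^3 + 4*t - 24*m*t + 6) / (16*m*(4*t+6)) := by
    field_simp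
    ring
  rw [hexp]
  apply div_nonneg _ (by positivity)
  rcases le_or_gt 0 (1 + 2*(m*t) - 4*(m*t)^2) with h | h
  · nlinarith [sq_nonneg (2*m*t - 1), mul_nonneg ht h]
  · have hts : (0:ℝ) ≤ m*t - t := by nlinarith
    nlinarith [mul_nonneg hts (by linarith : (0:ℝ) ≤ 4*(m*t)^2 - 2*(m*t) - 1),
      mul_nonneg (sq_nonneg (2*m*t - 1)) (by linarith : (0:ℝ) ≤ 1 - m*t)]

lemma key_upper {m α : ℝ} (hm : 1 ≤ m) (h0 : 0 ≤ α) (h1 : α ≤ 1) :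
    α + α * (1 - α) / (4 * m)
      ≤ (m + 1/2) * (Real.log (m + α) - Real.log m) := by
  have hm0 : (0:ℝ) < m := lt_of_lt_of_le one_pos hm
  set t := α / m with htdef
  have ht : 0 ≤ t := by positivity
  have hα : α = m * t := by rw [htdef]; field_simp
  have htm : m * t ≤ 1 := by rw [← hα]; exact h1
  have ht1 : t ≤ 1 := by nlinarith
  have he : (1 : ℝ) + t = (m + α) / m := by field_simp [htdef]; linarith
  have hp := pade_le_log ht
  rw [he, Real.log_div (by positivity) (by positivity)] at hp
  have step1 : (m + 1/2) * (2 * t / (t + 2))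
      ≤ (m + 1/2) * (Real.log (m + α) - Real.log m) := by
    apply mul_le_mul_of_nonneg_left hp (by linarith)
  refine le_trans ?_ step1
  rw [hα, ← sub_nonneg]
  have hexp : (m + 1/2) * (2 * t / (t + 2)) - (m * t + m * t * (1 - m * t) / (4 * m))
      = (t * (1 - m*t) * (2 - t)) / (4 * (t + 2)) := by
    field_simp
    ring
  rw [hexp]
  apply div_nonneg _ (by positivity)
  have := mul_nonneg (mul_nonneg ht (by linarith : (0:ℝ) ≤ 1 - m*t)) (by linarith : (0:ℝ) ≤ 2 - t)
  linarith [this]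


noncomputable def dd (k : ℕ) : ℝ := Real.log (Stirling.stirlingSeq (k + 1))

lemma diff_lt_hi (m : ℕ) :
    dd m - dd (m + 1) < 1 / (12 * ((m:ℝ) + 1)) - 1 / (12 * ((m:ℝ) + 2)) := by
  have hS := Stirling.log_stirlingSeq_diff_hasSum m
  set y : ℝ := (1 / (2 * ((m:ℝ) + 1) + 1)) ^ 2 with hy
  have hy0 : 0 < y := by positivity
  have hy1 : y < 1 := by
    rw [hy]
    have h1 : (1:ℝ) < 2 * ((m:ℝ) + 1) + 1 := by
      have : (0:ℝ) ≤ (m:ℝ) := Nat.cast_nonneg m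
      nlinarith
    rw [div_pow, one_pow, div_lt_one (by positivity)]
    nlinarith
  have hgeo : HasSum (fun k : ℕ => (1/3 : ℝ) * y ^ (k + 1)) ((1/3) * (y / (1 - y))) := by
    have h := (hasSum_geometric_of_lt_one hy0.le hy1).mul_left ((1/3) * y)
    have heq : ∀ k : ℕ, (1/3 : ℝ) * y * y ^ k = (1/3) * y ^ (k+1) := by
      intro k; rw [pow_succ]; ring
    rw [funext heq] at h
    have e : (1/3 : ℝ) * (y / (1 - y)) = 1/3 * y * (1 - y)⁻¹ := by ring
    rw [e]; exact h
  have hS' : HasSum (fun k : ℕ => (1:ℝ) / (2 * ((k:ℝ) + 1) + 1) * y ^ (k + 1))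
      (dd m - dd (m + 1)) := by
    convert hS using 2 with k
    rw [hy]
    push_cast
    norm_num [← inv_pow]
    all_goals rfl
  have hlt : dd m - dd (m + 1) < (1/3) * (y / (1 - y)) := by
    refine hasSum_lt (i := 1) ?_ ?_ hS' hgeo
    · intro k
      apply mul_le_mul_of_nonneg_right _ (pow_nonneg hy0.le _)
      rw [div_le_div_iff₀ (by positivity) (by norm_num)]
      have : (0:ℝ) ≤ (k:ℝ) := Nat.cast_nonneg k
      linarith
    · show (1:ℝ) / (2 * ((1:ℕ) + 1 : ℝ) + 1) * y ^ (1 + 1) < 1/3 * y ^ (1 + 1)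
      apply mul_lt_mul_of_pos_right _ (pow_pos hy0 _)
      norm_num
  refine hlt.trans_le (le_of_eq ?_)
  have h2 : (2 * ((m:ℝ) + 1) + 1) ^ 2 - 1 ≠ 0 := by nlinarith [Nat.cast_nonneg (α := ℝ) m]
  rw [hy]
  have hM : (0:ℝ) < (m:ℝ) + 1 := by positivity
  field_simp
  ring

lemma lo_lt_diff (m : ℕ) :
    1 / (12 * ((m:ℝ) + 1) + 1) - 1 / (12 * ((m:ℝ) + 2) + 1) < dd m - dd (m + 1) := by
  have hS := Stirling.log_stirlingSeq_diff_hasSum m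
  set y : ℝ := (1 / (2 * ((m:ℝ) + 1) + 1)) ^ 2 with hy
  have hy0 : 0 < y := by positivity
  have hS' : HasSum (fun k : ℕ => (1:ℝ) / (2 * ((k:ℝ) + 1) + 1) * y ^ (k + 1))
      (dd m - dd (m + 1)) := by
    convert hS using 2 with k
    rw [hy]
    push_cast
    norm_num [← inv_pow]
    all_goals rfl
  have hfirst : (1:ℝ) / (2 * ((0:ℕ) + 1 : ℝ) + 1) * y ^ (0 + 1) ≤ dd m - dd (m + 1) := by
    refine le_hasSum hS' 0 fun j hj => by positivity
  have h3 : (1:ℝ) / (2 * ((0:ℕ) + 1 : ℝ) + 1) * y ^ (0 + 1) = y / 3 := by push_cast; ring_nf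
  rw [h3] at hfirst
  refine lt_of_lt_of_le ?_ hfirst
  have hM : (1:ℝ) ≤ (m:ℝ) + 1 := by have := Nat.cast_nonneg (α := ℝ) m; linarith
  rw [hy, div_pow, one_pow]
  rw [div_sub_div _ _ (by nlinarith) (by nlinarith), div_div]
  rw [div_lt_div_iff₀ (by nlinarith) (by positivity)]
  ring_nf
  nlinarith [sq_nonneg ((m:ℝ)+1)]

lemma dd_tendsto : Tendsto dd atTop (nhds (Real.log (Real.sqrt π))) := by
  have h1 : Tendsto (fun k : ℕ => Stirling.stirlingSeq (k + 1)) atTop (nhds (Real.sqrt π)) :=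
    Stirling.tendsto_stirlingSeq_sqrt_pi.comp (tendsto_add_atTop_nat 1)
  exact h1.log (by positivity)

lemma aux_tendsto (c : ℝ) (hc : 0 ≤ c) :
    Tendsto (fun k : ℕ => 1 / (12 * ((k:ℝ) + 1) + c)) atTop (nhds 0) := by
  have h1 : Tendsto (fun k : ℕ => 12 * ((k:ℝ) + 1) + c) atTop atTop := by
    apply tendsto_atTop_mono (fun k : ℕ => ?_) tendsto_natCast_atTop_atTop
    have : (0:ℝ) ≤ (k:ℝ) := Nat.cast_nonneg k
    linarith
  simpa [one_div, Function.comp_def] using tendsto_inv_atTop_zero.comp h1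

lemma dd_le_hi (m : ℕ) : dd m ≤ Real.log (Real.sqrt π) + 1 / (12 * ((m:ℝ) + 1)) := by
  have hmono : Monotone fun k : ℕ => dd k - 1 / (12 * ((k:ℝ) + 1)) := by
    apply monotone_nat_of_le_succ
    intro k
    have := diff_lt_hi k
    push_cast
    have h2 : ((k:ℝ) + 1) + 1 = (k:ℝ) + 2 := by ring
    rw [h2]
    linarith
  have htend : Tendsto (fun k : ℕ => dd k - 1 / (12 * ((k:ℝ) + 1))) atTop
      (nhds (Real.log (Real.sqrt π))) := by
    simpa using dd_tendsto.sub (aux_tendsto 0 le_rfl)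
  have := hmono.ge_of_tendsto htend m
  linarith [this]

lemma lo_le_dd (m : ℕ) : Real.log (Real.sqrt π) + 1 / (12 * ((m:ℝ) + 1) + 1) ≤ dd m := by
  have hanti : Antitone fun k : ℕ => dd k - 1 / (12 * ((k:ℝ) + 1) + 1) := by
    apply antitone_nat_of_succ_le
    intro k
    have := lo_lt_diff k
    push_cast
    have h2 : ((k:ℝ) + 1) + 1 = (k:ℝ) + 2 := by ring
    rw [h2]
    linarith
  have htend : Tendsto (fun k : ℕ => dd k - 1 / (12 * ((k:ℝ) + 1) + 1)) atTop
      (nhds (Real.log (Real.sqrt π))) := by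
    simpa using dd_tendsto.sub (aux_tendsto 1 zero_le_one)
  have := hanti.le_of_tendsto htend m
  linarith [this]

lemma robbins_upper (n : ℕ) (hn : 0 < n) :
    Real.log (Stirling.stirlingSeq n) < Real.log (Real.sqrt π) + 1 / (12 * (n:ℝ)) := by
  obtain ⟨m, rfl⟩ := Nat.exists_eq_succ_of_ne_zero hn.ne'
  have h1 := diff_lt_hi m
  have h2 := dd_le_hi (m + 1)
  have : dd m < Real.log (Real.sqrt π) + 1 / (12 * ((m:ℝ) + 1)) := by
    push_cast at h2 ⊢
    have h3 : ((m:ℝ) + 1) + 1 = (m:ℝ) + 2 := by ring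
    rw [h3] at h2
    linarith
  simpa [dd, Nat.succ_eq_add_one] using this

lemma robbins_lower (n : ℕ) (hn : 0 < n) :
    Real.log (Real.sqrt π) + 1 / (12 * (n:ℝ) + 1) < Real.log (Stirling.stirlingSeq n) := by
  obtain ⟨m, rfl⟩ := Nat.exists_eq_succ_of_ne_zero hn.ne'
  have h1 := lo_lt_diff m
  have h2 := lo_le_dd (m + 1)
  have : Real.log (Real.sqrt π) + 1 / (12 * ((m:ℝ) + 1) + 1) < dd m := by
    push_cast at h2 ⊢
    have h3 : ((m:ℝ) + 1) + 1 = (m:ℝ) + 2 := by ring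
    rw [h3] at h2
    linarith
  simpa [dd, Nat.succ_eq_add_one] using this

theorem factorial_expression_two_sided_bound (n : ℕ) (hn : 0 < n) (α : ℝ)
    (hα0 : 0 ≤ α) (hα1 : α ≤ 1) :
    Real.sqrt (2 * Real.pi) *
        Real.exp (1 / (12 * n + 1) - 1 / (16 * n) - α * (1 - α) / (4 * n)) /
        Real.sqrt ((n : ℝ) + α)
      < (Nat.factorial n : ℝ) / ((n : ℝ) + α) ^ (n + 1) * Real.exp ((n : ℝ) + α) ∧
    (Nat.factorial n : ℝ) / ((n : ℝ) + α) ^ (n + 1) * Real.exp ((n : ℝ) + α)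
      < Real.sqrt (2 * Real.pi) *
          Real.exp (1 / (12 * n) - α * (1 - α) / (4 * n)) /
          Real.sqrt ((n : ℝ) + α) := by
  have hm : (1:ℝ) ≤ (n:ℝ) := by exact_mod_cast hn
  have hm0 : (0:ℝ) < (n:ℝ) := by linarith
  have hX : (0:ℝ) < (n:ℝ) + α := by linarith
  have hfac : (0:ℝ) < (Nat.factorial n : ℝ) := by exact_mod_cast n.factorial_pos
  have hEpos : 0 < (Nat.factorial n : ℝ) / ((n : ℝ) + α) ^ (n + 1) * Real.exp ((n : ℝ) + α) := by
    positivity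
  have hL1pos : 0 < Real.sqrt (2 * Real.pi) *
      Real.exp (1 / (12 * n + 1) - 1 / (16 * n) - α * (1 - α) / (4 * n)) /
      Real.sqrt ((n : ℝ) + α) := by
    have := Real.pi_pos
    positivity
  have hL2pos : 0 < Real.sqrt (2 * Real.pi) *
      Real.exp (1 / (12 * n) - α * (1 - α) / (4 * n)) / Real.sqrt ((n : ℝ) + α) := by
    have := Real.pi_pos
    positivity
  -- log identities
  have hlogs := Stirling.log_stirlingSeq_formula n
  have hlog2n : Real.log (2 * (n:ℝ)) = Real.log 2 + Real.log (n:ℝ) :=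
    Real.log_mul two_ne_zero (by linarith)
  have hlogne : Real.log ((n:ℝ) / Real.exp 1) = Real.log (n:ℝ) - 1 := by
    rw [Real.log_div (by linarith) (Real.exp_ne_zero 1), Real.log_exp]
  have hlogfact : Real.log (Nat.factorial n : ℝ) = Real.log (Stirling.stirlingSeq n)
      + 1/2 * (Real.log 2 + Real.log (n:ℝ)) + (n:ℝ) * Real.log (n:ℝ) - (n:ℝ) := by
    rw [hlog2n, hlogne] at hlogs
    linarith
  have hlogE : Real.log ((Nat.factorial n : ℝ) / ((n : ℝ) + α) ^ (n + 1)
        * Real.exp ((n : ℝ) + α))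
      = Real.log (Nat.factorial n : ℝ) - ((n:ℝ) + 1) * Real.log ((n:ℝ) + α)
        + ((n:ℝ) + α) := by
    rw [Real.log_mul (by positivity) (Real.exp_ne_zero _),
      Real.log_div (by positivity) (by positivity), Real.log_pow, Real.log_exp]
    push_cast
    ring
  have hlogsqrtpi : Real.log (Real.sqrt π) = Real.log π / 2 := Real.log_sqrt pi_pos.le
  have hlogL1 : Real.log (Real.sqrt (2 * Real.pi) *
        Real.exp (1 / (12 * n + 1) - 1 / (16 * n) - α * (1 - α) / (4 * n)) /
        Real.sqrt ((n : ℝ) + α))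
      = 1/2 * (Real.log 2 + Real.log π)
        + (1 / (12 * (n:ℝ) + 1) - 1 / (16 * (n:ℝ)) - α * (1 - α) / (4 * (n:ℝ)))
        - 1/2 * Real.log ((n:ℝ) + α) := by
    rw [Real.log_div (by positivity) (by positivity),
      Real.log_mul (by positivity) (Real.exp_ne_zero _), Real.log_exp,
      Real.log_sqrt (by positivity), Real.log_sqrt hX.le,
      Real.log_mul two_ne_zero pi_pos.ne']
    ring
  have hlogL2 : Real.log (Real.sqrt (2 * Real.pi) *
        Real.exp (1 / (12 * n) - α * (1 - α) / (4 * n)) / Real.sqrt ((n : ℝ) + α))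
      = 1/2 * (Real.log 2 + Real.log π)
        + (1 / (12 * (n:ℝ)) - α * (1 - α) / (4 * (n:ℝ)))
        - 1/2 * Real.log ((n:ℝ) + α) := by
    rw [Real.log_div (by positivity) (by positivity),
      Real.log_mul (by positivity) (Real.exp_ne_zero _), Real.log_exp,
      Real.log_sqrt (by positivity), Real.log_sqrt hX.le,
      Real.log_mul two_ne_zero pi_pos.ne']
    ring
  have hkl := key_lower hm hα0 hα1
  have hku := key_upper hm hα0 hα1
  have hrl := robbins_lower n hn
  have hru := robbins_upper n hn
  rw [hlogsqrtpi] at hrl hru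
  constructor
  · have hloglt : Real.log (Real.sqrt (2 * Real.pi) *
        Real.exp (1 / (12 * n + 1) - 1 / (16 * n) - α * (1 - α) / (4 * n)) /
        Real.sqrt ((n : ℝ) + α))
        < Real.log ((Nat.factorial n : ℝ) / ((n : ℝ) + α) ^ (n + 1)
          * Real.exp ((n : ℝ) + α)) := by
      rw [hlogL1, hlogE, hlogfact]
      linarith
    calc Real.sqrt (2 * Real.pi) *
          Real.exp (1 / (12 * n + 1) - 1 / (16 * n) - α * (1 - α) / (4 * n)) /
          Real.sqrt ((n : ℝ) + α)
        = Real.exp (Real.log (Real.sqrt (2 * Real.pi) *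
            Real.exp (1 / (12 * n + 1) - 1 / (16 * n) - α * (1 - α) / (4 * n)) /
            Real.sqrt ((n : ℝ) + α))) := (Real.exp_log hL1pos).symm
      _ < Real.exp (Real.log ((Nat.factorial n : ℝ) / ((n : ℝ) + α) ^ (n + 1)
            * Real.exp ((n : ℝ) + α))) := Real.exp_lt_exp.mpr hloglt
      _ = _ := Real.exp_log hEpos
  · have hloglt : Real.log ((Nat.factorial n : ℝ) / ((n : ℝ) + α) ^ (n + 1)
          * Real.exp ((n : ℝ) + α))
        < Real.log (Real.sqrt (2 * Real.pi) *
          Real.exp (1 / (12 * n) - α * (1 - α) / (4 * n)) / Real.sqrt ((n : ℝ) + α)) := by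
      rw [hlogL2, hlogE, hlogfact]
      linarith
    calc (Nat.factorial n : ℝ) / ((n : ℝ) + α) ^ (n + 1) * Real.exp ((n : ℝ) + α)
        = Real.exp (Real.log ((Nat.factorial n : ℝ) / ((n : ℝ) + α) ^ (n + 1)
            * Real.exp ((n : ℝ) + α))) := (Real.exp_log hEpos).symm
      _ < Real.exp (Real.log (Real.sqrt (2 * Real.pi) *
            Real.exp (1 / (12 * n) - α * (1 - α) / (4 * n)) /
            Real.sqrt ((n : ℝ) + α))) := Real.exp_lt_exp.mpr hloglt
      _ = _ := Real.exp_log hL2pos
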